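/- (Improvement condition, equations (23)–(25)) Under the federated setup with mutually uncorrelated noises satisfying 𝔼[e⁽ⁱ⁾ (e⁽ʲ⁾)ᵀ] = 0 for i ≠ j and 𝔼[e⁽ⁱ⁾ (e⁽ⁱ⁾)ᵀ] = σᵢ² I, suppose α⁽⁰⁾ ∈ [0,1) and that the dissimilarity terms satisfy Σ_{i=1}^{M-1} (α⁽ⁱ⁾)² ( ‖Δ⁽ⁱ⁾(Δ⁽ⁱ⁾)ᵀ‖₂ + σᵢ² ) + Σ_{i=1}^{M-1} Σ_{j=1, j≠i}^{M-1} α⁽ⁱ⁾ α⁽ʲ⁾ ‖Δ⁽ⁱ⁾(Δ⁽ʲ⁾)ᵀ‖₂ < (1 − (α⁽⁰⁾)²) σ₀². Then the dispersion matrix Ω = 𝔼[(y^fed − ȳ₀)(y^fed − ȳ₀)ᵀ] satisfies ‖Ω‖₂ < σ₀²; i.e., the federated trajectory has strictly smaller dispersion around the noiseless nominal output than the trajectory collected from the nominal system alone (whose dispersion has operator norm σ₀²). -/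

import Mathlib

open MeasureTheory Finset Filter

/-- The induced 2-norm (operator norm with respect to the Euclidean norm, i.e. the
largest singular value) of a real square matrix. -/
noncomputable def inducedTwoNorm {n : ℕ} (A : Matrix (Fin n) (Fin n) ℝ) : ℝ :=
  ‖Matrix.toEuclideanCLM (𝕜 := ℝ) A‖

set_option maxHeartbeats 1000000
set_option synthInstance.maxHeartbeats 400000


lemma itn_nonneg {n : ℕ} (A : Matrix (Fin n) (Fin n) ℝ) : 0 ≤ inducedTwoNorm A :=
  norm_nonneg _

lemma itn_add_le {n : ℕ} (A B : Matrix (Fin n) (Fin n) ℝ) :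
    inducedTwoNorm (A + B) ≤ inducedTwoNorm A + inducedTwoNorm B := by
  unfold inducedTwoNorm; rw [map_add]; exact norm_add_le _ _

lemma itn_smul {n : ℕ} (c : ℝ) (A : Matrix (Fin n) (Fin n) ℝ) :
    inducedTwoNorm (c • A) = |c| * inducedTwoNorm A := by
  unfold inducedTwoNorm
  rw [_root_.map_smul]
  rw [norm_smul c (Matrix.toEuclideanCLM (𝕜 := ℝ) A), Real.norm_eq_abs]

lemma itn_zero {n : ℕ} : inducedTwoNorm (0 : Matrix (Fin n) (Fin n) ℝ) = 0 := by
  unfold inducedTwoNorm; rw [map_zero, norm_zero]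

lemma itn_one_le {n : ℕ} : inducedTwoNorm (1 : Matrix (Fin n) (Fin n) ℝ) ≤ 1 := by
  unfold inducedTwoNorm
  rw [_root_.map_one, ContinuousLinearMap.one_def]
  exact ContinuousLinearMap.norm_id_le

lemma itn_sum_le {n : ℕ} {ι : Type*} (s : Finset ι) (f : ι → Matrix (Fin n) (Fin n) ℝ) :
    inducedTwoNorm (∑ i ∈ s, f i) ≤ ∑ i ∈ s, inducedTwoNorm (f i) := by
  unfold inducedTwoNorm; rw [map_sum]; exact norm_sum_le _ _

lemma vecMulVec_zero_left {n : ℕ} (v : Fin n → ℝ) :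
    Matrix.vecMulVec (0 : Fin n → ℝ) v = 0 := by
  ext a b; simp [Matrix.vecMulVec_apply]

lemma vecMulVec_zero_right {n : ℕ} (v : Fin n → ℝ) :
    Matrix.vecMulVec v (0 : Fin n → ℝ) = 0 := by
  ext a b; simp [Matrix.vecMulVec_apply]

/-- **Improvement condition (equations (23)–(25) of the paper).** Under the federated
setup with mutually uncorrelated noises having isotropic covariances `σᵢ² I`, if
`α⁽⁰⁾ < 1` and the dissimilarity terms satisfy the strict inequality
`Σᵢ (α⁽ⁱ⁾)² (‖Δ⁽ⁱ⁾(Δ⁽ⁱ⁾)ᵀ‖₂ + σᵢ²) + Σᵢ Σ_{j≠i} α⁽ⁱ⁾α⁽ʲ⁾ ‖Δ⁽ⁱ⁾(Δ⁽ʲ⁾)ᵀ‖₂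
  < (1 − (α⁽⁰⁾)²) σ₀²`,
then the dispersion matrix of the federated trajectory has induced 2-norm strictly
smaller than `σ₀²`, the dispersion attained using the nominal system alone. -/
theorem federated_dispersion_improvement
    {n M : ℕ} (hM : 1 ≤ M)
    {Ω : Type*} [MeasurableSpace Ω] (μ : Measure Ω) [IsProbabilityMeasure μ]
    -- noiseless nominal output trajectory
    (ybar : Fin n → ℝ)
    -- deterministic discrepancy vectors, with zero discrepancy for the nominal system
    (Δ : Fin M → Fin n → ℝ) (hΔ0 : Δ ⟨0, hM⟩ = 0)
    -- weights in [0,1] summing to one, with α⁽⁰⁾ ∈ [0,1)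
    (α : Fin M → ℝ) (hα0 : ∀ i, 0 ≤ α i) (hα1 : ∀ i, α i ≤ 1)
    (hαsum : ∑ i, α i = 1)
    (hα0lt : α ⟨0, hM⟩ < 1)
    -- noise standard deviations
    (σ : Fin M → ℝ) (hσ0 : ∀ i, 0 ≤ σ i)
    -- zero-mean integrable measurement noises
    (e : Fin M → Ω → Fin n → ℝ)
    (he_int : ∀ i, Integrable (e i) μ)
    (he_mean : ∀ i, ∫ ω, e i ω ∂μ = 0)
    -- entrywise integrability of all noise outer products
    (hout_int : ∀ i j : Fin M, ∀ a b : Fin n,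
      Integrable (fun ω => e i ω a * e j ω b) μ)
    -- mutually uncorrelated noises: 𝔼[e⁽ⁱ⁾ (e⁽ʲ⁾)ᵀ] = 0 for i ≠ j
    (he_cross : ∀ i j : Fin M, i ≠ j → ∀ a b : Fin n,
      ∫ ω, e i ω a * e j ω b ∂μ = 0)
    -- isotropic covariances: 𝔼[e⁽ⁱ⁾ (e⁽ⁱ⁾)ᵀ] = σᵢ² I
    (he_cov : ∀ i : Fin M, ∀ a b : Fin n,
      ∫ ω, e i ω a * e i ω b ∂μ = (σ i ^ 2 • (1 : Matrix (Fin n) (Fin n) ℝ)) a b)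
    -- measured trajectories and the federated trajectory
    (y : Fin M → Ω → Fin n → ℝ)
    (hy : ∀ i ω, y i ω = ybar + Δ i + e i ω)
    (yfed : Ω → Fin n → ℝ)
    (hyfed : ∀ ω, yfed ω = ∑ i, α i • y i ω)
    -- the dispersion matrix, defined entrywise
    (Ωdisp : Matrix (Fin n) (Fin n) ℝ)
    (hΩdisp : ∀ a b : Fin n,
      Ωdisp a b = ∫ ω, (yfed ω a - ybar a) * (yfed ω b - ybar b) ∂μ)
    -- the improvement condition on the dissimilarity terms
    (himprove :
      ∑ i ∈ Finset.univ.erase ⟨0, hM⟩,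
          (α i) ^ 2 * (inducedTwoNorm (Matrix.vecMulVec (Δ i) (Δ i)) + σ i ^ 2)
        + ∑ i ∈ Finset.univ.erase ⟨0, hM⟩,
            ∑ j ∈ (Finset.univ.erase (⟨0, hM⟩ : Fin M)).erase i,
              α i * α j * inducedTwoNorm (Matrix.vecMulVec (Δ i) (Δ j))
      < (1 - (α ⟨0, hM⟩) ^ 2) * σ ⟨0, hM⟩ ^ 2) :
    inducedTwoNorm Ωdisp < σ ⟨0, hM⟩ ^ 2 := by
  set i0 : Fin M := ⟨0, hM⟩ with hi0
  -- componentwise integrability and zero mean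
  have he_inta : ∀ i a, Integrable (fun ω => e i ω a) μ := fun i a =>
    (ContinuousLinearMap.proj (R := ℝ) (φ := fun _ : Fin n => ℝ) a).integrable_comp (he_int i)
  have he_meana : ∀ i a, ∫ ω, e i ω a ∂μ = 0 := by
    intro i a
    have h := (ContinuousLinearMap.proj (R := ℝ) (φ := fun _ : Fin n => ℝ) a).integral_comp_comm
      (he_int i)
    simp only [ContinuousLinearMap.proj_apply] at h
    rw [h, he_mean i]; simp
  -- the centered federated trajectory
  have hdiff : ∀ (ω : Ω) (a : Fin n),
      yfed ω a - ybar a = ∑ i, α i * (Δ i a + e i ω a) := by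
    intro ω a
    have h1 : yfed ω a = ∑ i, α i * (ybar a + Δ i a + e i ω a) := by
      rw [hyfed, Finset.sum_apply]
      refine Finset.sum_congr rfl fun i _ => ?_
      rw [Pi.smul_apply, hy, smul_eq_mul]; rfl
    rw [h1]
    have h2 : ∑ i, α i * (ybar a + Δ i a + e i ω a)
        = (∑ i, α i) * ybar a + ∑ i, α i * (Δ i a + e i ω a) := by
      rw [Finset.sum_mul, ← Finset.sum_add_distrib]
      exact Finset.sum_congr rfl fun i _ => by ring
    rw [h2, hαsum, one_mul, add_sub_cancel_left]
  -- integrability of each pairwise term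
  have hint : ∀ (i j : Fin M) (a b : Fin n),
      Integrable (fun ω => (α i * (Δ i a + e i ω a)) * (α j * (Δ j b + e j ω b))) μ := by
    intro i j a b
    have hfun : (fun ω => (α i * (Δ i a + e i ω a)) * (α j * (Δ j b + e j ω b)))
        = fun ω => (α i * Δ i a * (α j * Δ j b))
          + ((α i * Δ i a * α j) * e j ω b
          + ((α j * Δ j b * α i) * e i ω a
          + (α i * α j) * (e i ω a * e j ω b))) := by
      funext ω; ring
    rw [hfun]
    exact (integrable_const _).add (((he_inta j b).const_mul _).add
      (((he_inta i a).const_mul _).add ((hout_int i j a b).const_mul _)))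
  -- the value of each pairwise integral
  have hval : ∀ (i j : Fin M) (a b : Fin n),
      ∫ ω, (α i * (Δ i a + e i ω a)) * (α j * (Δ j b + e j ω b)) ∂μ
        = (α i * α j) * (Δ i a * Δ j b)
          + (if i = j then α i ^ 2 * σ i ^ 2 * (if a = b then 1 else 0) else 0) := by
    intro i j a b
    have hfun : (fun ω => (α i * (Δ i a + e i ω a)) * (α j * (Δ j b + e j ω b)))
        = fun ω => (α i * Δ i a * (α j * Δ j b))
          + ((α i * Δ i a * α j) * e j ω b
          + ((α j * Δ j b * α i) * e i ω a
          + (α i * α j) * (e i ω a * e j ω b))) := by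
      funext ω; ring
    have h1 : Integrable (fun ω => α i * Δ i a * α j * e j ω b) μ :=
      (he_inta j b).const_mul _
    have h2 : Integrable (fun ω => α j * Δ j b * α i * e i ω a) μ :=
      (he_inta i a).const_mul _
    have h3 : Integrable (fun ω => α i * α j * (e i ω a * e j ω b)) μ :=
      (hout_int i j a b).const_mul _
    have h23 : Integrable (fun ω => α j * Δ j b * α i * e i ω a
        + α i * α j * (e i ω a * e j ω b)) μ := h2.add h3
    have h123 : Integrable (fun ω => α i * Δ i a * α j * e j ω b
        + (α j * Δ j b * α i * e i ω a + α i * α j * (e i ω a * e j ω b))) μ := h1.add h23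
    rw [hfun]
    rw [integral_add (integrable_const _) h123]
    rw [integral_add h1 h23]
    rw [integral_add h2 h3]
    have hprod : ∫ ω, e i ω a * e j ω b ∂μ
        = if i = j then σ i ^ 2 * (if a = b then 1 else 0) else 0 := by
      by_cases h : i = j
      · subst h
        rw [if_pos rfl, he_cov i a b]
        simp [Matrix.smul_apply, Matrix.one_apply]
      · rw [if_neg h, he_cross i j h a b]
    have e1 : ∫ _ω, α i * Δ i a * (α j * Δ j b) ∂μ = α i * Δ i a * (α j * Δ j b) := by
      simp
    have e2 : ∫ ω, α i * Δ i a * α j * e j ω b ∂μ = 0 := by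
      rw [integral_const_mul, he_meana, mul_zero]
    have e3 : ∫ ω, α j * Δ j b * α i * e i ω a ∂μ = 0 := by
      rw [integral_const_mul, he_meana, mul_zero]
    have e4 : ∫ ω, α i * α j * (e i ω a * e j ω b) ∂μ
        = α i * α j * (if i = j then σ i ^ 2 * (if a = b then 1 else 0) else 0) := by
      rw [integral_const_mul, hprod]
    rw [e1, e2, e3, e4]
    rcases eq_or_ne i j with h | h
    · subst h
      simp only [eq_self_iff_true, if_true]
      split_ifs <;> ring
    · simp only [if_neg h]; ring
  -- the matrix identity for Ωdisp
  have hmat : Ωdisp = (∑ i, ∑ j, (α i * α j) • Matrix.vecMulVec (Δ i) (Δ j))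
      + (∑ i, α i ^ 2 * σ i ^ 2) • (1 : Matrix (Fin n) (Fin n) ℝ) := by
    ext a b
    rw [hΩdisp a b]
    have hsum : (fun ω => (yfed ω a - ybar a) * (yfed ω b - ybar b))
        = fun ω => ∑ i, ∑ j, (α i * (Δ i a + e i ω a)) * (α j * (Δ j b + e j ω b)) := by
      funext ω; rw [hdiff ω a, hdiff ω b, Finset.sum_mul_sum]
    rw [hsum]
    rw [integral_finset_sum _ (fun i _ => integrable_finset_sum _ (fun j _ => hint i j a b))]
    have hstep : ∀ i : Fin M,
        ∫ ω, ∑ j, (α i * (Δ i a + e i ω a)) * (α j * (Δ j b + e j ω b)) ∂μ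
          = ∑ j, ((α i * α j) * (Δ i a * Δ j b)
            + (if i = j then α i ^ 2 * σ i ^ 2 * (if a = b then 1 else 0) else 0)) := by
      intro i
      rw [integral_finset_sum _ (fun j _ => hint i j a b)]
      exact Finset.sum_congr rfl fun j _ => hval i j a b
    rw [Finset.sum_congr rfl (fun i _ => hstep i)]
    simp only [Finset.sum_add_distrib]
    have hdiag : ∀ i : Fin M,
        (∑ j, if i = j then α i ^ 2 * σ i ^ 2 * (if a = b then 1 else 0) else 0)
          = α i ^ 2 * σ i ^ 2 * (if a = b then 1 else 0) := by
      intro i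
      rw [Finset.sum_ite_eq Finset.univ i
        (fun _ => α i ^ 2 * σ i ^ 2 * (if a = b then 1 else 0))]
      simp
    rw [Finset.sum_congr rfl (fun i _ => hdiag i)]
    simp only [Matrix.add_apply, Matrix.sum_apply, Matrix.smul_apply,
      Matrix.vecMulVec_apply, Matrix.one_apply, smul_eq_mul]
    rw [Finset.sum_mul]
  -- the norm bound
  set K : Fin M → Fin M → ℝ :=
    fun i j => inducedTwoNorm (Matrix.vecMulVec (Δ i) (Δ j)) with hK
  set S : ℝ := ∑ i, α i ^ 2 * σ i ^ 2 with hS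
  have hSnn : 0 ≤ S :=
    Finset.sum_nonneg fun i _ => mul_nonneg (sq_nonneg _) (sq_nonneg _)
  have hKnn : ∀ i j, 0 ≤ K i j := fun i j => itn_nonneg _
  have hbound : inducedTwoNorm Ωdisp ≤ (∑ i, ∑ j, (α i * α j) * K i j) + S := by
    rw [hmat]
    refine le_trans (itn_add_le _ _) (add_le_add ?_ ?_)
    · refine le_trans (itn_sum_le _ _) (Finset.sum_le_sum fun i _ => ?_)
      refine le_trans (itn_sum_le _ _) (Finset.sum_le_sum fun j _ => ?_)
      rw [itn_smul, abs_of_nonneg (mul_nonneg (hα0 i) (hα0 j))]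
    · calc inducedTwoNorm (S • (1 : Matrix (Fin n) (Fin n) ℝ))
          = |S| * inducedTwoNorm (1 : Matrix (Fin n) (Fin n) ℝ) := itn_smul _ _
        _ ≤ S * 1 := by
            rw [abs_of_nonneg hSnn]
            exact mul_le_mul_of_nonneg_left itn_one_le hSnn
        _ = S := mul_one _
  -- vanishing terms involving the nominal index
  have hK0l : ∀ j, K i0 j = 0 := by
    intro j; rw [hK]; simp only [hΔ0, vecMulVec_zero_left, itn_zero]
  have hK0r : ∀ i, K i i0 = 0 := by
    intro i; rw [hK]; simp only [hΔ0, vecMulVec_zero_right, itn_zero]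
  -- split the double sum
  have hDS : (∑ i, ∑ j, (α i * α j) * K i j)
      = ∑ i ∈ Finset.univ.erase i0, α i ^ 2 * K i i
        + ∑ i ∈ Finset.univ.erase i0, ∑ j ∈ (Finset.univ.erase i0).erase i,
            α i * α j * K i j := by
    rw [← Finset.add_sum_erase _ _ (Finset.mem_univ i0)]
    have hz : ∑ j, (α i0 * α j) * K i0 j = 0 := by
      refine Finset.sum_eq_zero fun j _ => by rw [hK0l, mul_zero]
    rw [hz, zero_add, ← Finset.sum_add_distrib]
    refine Finset.sum_congr rfl fun i hi => ?_
    rw [← Finset.add_sum_erase _ _ (Finset.mem_univ i0), hK0r, mul_zero, zero_add]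
    rw [← Finset.add_sum_erase _ _
      (Finset.mem_erase.mpr ⟨(Finset.mem_erase.mp hi).1, Finset.mem_univ i⟩)]
    congr 1
    ring
  have hSsplit : S = α i0 ^ 2 * σ i0 ^ 2
      + ∑ i ∈ Finset.univ.erase i0, α i ^ 2 * σ i ^ 2 := by
    rw [hS, ← Finset.add_sum_erase _ _ (Finset.mem_univ i0)]
  have hsplit : ∑ i ∈ Finset.univ.erase i0, α i ^ 2 * (K i i + σ i ^ 2)
      = ∑ i ∈ Finset.univ.erase i0, α i ^ 2 * K i i
        + ∑ i ∈ Finset.univ.erase i0, α i ^ 2 * σ i ^ 2 := by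
    rw [← Finset.sum_add_distrib]
    exact Finset.sum_congr rfl fun i _ => by ring
  have hfin : α i0 ^ 2 * σ i0 ^ 2 + (1 - α i0 ^ 2) * σ i0 ^ 2 = σ i0 ^ 2 := by ring
  linarith [hbound, himprove]
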